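/- Given k ℝ-linearly independent real matrices M_1, ..., M_k ∈ M_{n×m}(ℝ), there exists a fluctuation f (a finite family of real coefficients r_j and orthogonal matrices u_j ∈ O(n), v_j ∈ O(m)) such that M_1^f := Σ_j r_j u_j M_1 v_j ≠ 0 while M_i^f := Σ_j r_j u_j M_i v_j = 0 for all i ≠ 1. -/

import Mathlib

open Matrix

noncomputable section

lemma span_orth_top (p : ℕ) :
    Submodule.span ℝ ((Matrix.orthogonalGroup (Fin p) ℝ : Submonoid _) : Set (Matrix (Fin p) (Fin p) ℝ)) = ⊤ := by
  set O := ((Matrix.orthogonalGroup (Fin p) ℝ : Submonoid _) : Set (Matrix (Fin p) (Fin p) ℝ)) with hO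
  set S := Submodule.span ℝ O with hS
  have hmem : ∀ u ∈ Matrix.orthogonalGroup (Fin p) ℝ, u ∈ S := fun u hu => Submodule.subset_span hu
  have hright : ∀ x ∈ S, ∀ u ∈ Matrix.orthogonalGroup (Fin p) ℝ, x * u ∈ S := by
    intro x hx u hu
    induction hx using Submodule.span_induction with
    | mem y hy => exact hmem _ (mul_mem hy hu)
    | zero => simpa using S.zero_mem
    | add y z _ _ hy hz => simpa [add_mul] using S.add_mem hy hz
    | smul c y _ hy => simpa [smul_mul_assoc] using S.smul_mem c hy
  have hdiag : ∀ a : Fin p, Matrix.single a a (1:ℝ) ∈ S := by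
    intro a
    have hD : (diagonal (fun i => if i = a then (-1:ℝ) else 1)) ∈ Matrix.orthogonalGroup (Fin p) ℝ := by
      rw [Matrix.mem_orthogonalGroup_iff]
      simp [Matrix.star_eq_conjTranspose, diagonal_conjTranspose]
      ext i j
      simp [diagonal, one_apply]
      split_ifs <;> norm_num
    have heq : Matrix.single a a (1:ℝ) =
        (2⁻¹ : ℝ) • ((1 : Matrix (Fin p) (Fin p) ℝ) - diagonal (fun i => if i = a then (-1:ℝ) else 1)) := by
      ext i j
      by_cases hi : a = i <;> by_cases hj : a = j <;> by_cases hij : i = j <;>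
        simp_all [Matrix.single, one_apply, diagonal_apply, eq_comm] <;> norm_num
    rw [heq]
    exact S.smul_mem _ (S.sub_mem (hmem 1 (one_mem _)) (hmem _ hD))
  have hstd : ∀ a b : Fin p, Matrix.single a b (1:ℝ) ∈ S := by
    intro a b
    have hP : ((Equiv.swap a b).toPEquiv.toMatrix : Matrix (Fin p) (Fin p) ℝ) ∈ Matrix.orthogonalGroup (Fin p) ℝ := by
      rw [Matrix.mem_orthogonalGroup_iff]
      have hconj : (((Equiv.swap a b).toPEquiv.toMatrix : Matrix (Fin p) (Fin p) ℝ))ᴴ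
          = ((Equiv.swap a b).toPEquiv.toMatrix)ᵀ := by
        ext i j; simp [conjTranspose_apply, PEquiv.toMatrix_apply]
      rw [← PEquiv.toMatrix_symm, ← Equiv.toPEquiv_symm, ← PEquiv.toMatrix_trans]
      simp [← Equiv.toPEquiv_trans]
    have : Matrix.single a a (1:ℝ) * (Equiv.swap a b).toPEquiv.toMatrix = Matrix.single a b 1 := by
      rw [PEquiv.mul_toMatrix_toPEquiv]
      ext i j
      simp [Matrix.single, submatrix, Equiv.swap_apply_def]
      by_cases hjb : j = b <;> by_cases hja : j = a <;> aesop
    rw [← this]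
    exact hright _ (hdiag a) _ hP
  rw [eq_top_iff]
  intro A _
  rw [matrix_eq_sum_single A]
  refine Submodule.sum_mem _ fun a _ => Submodule.sum_mem _ fun b _ => ?_
  have : Matrix.single a b (A a b) = A a b • Matrix.single a b (1:ℝ) := by
    simp [smul_single]
  rw [this]
  exact S.smul_mem _ (hstd a b)


/-- The sandwich map `M ↦ A * M * B` as a linear endomorphism. -/
def sand (n m : ℕ) (A : Matrix (Fin n) (Fin n) ℝ) (B : Matrix (Fin m) (Fin m) ℝ) :
    Matrix (Fin n) (Fin m) ℝ →ₗ[ℝ] Matrix (Fin n) (Fin m) ℝ where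
  toFun M := A * M * B
  map_add' := by intro x y; simp [Matrix.mul_add, Matrix.add_mul]
  map_smul' := by intro c x; simp [Matrix.mul_smul, Matrix.smul_mul]

@[simp] lemma sand_apply (n m : ℕ) (A : Matrix (Fin n) (Fin n) ℝ)
    (B : Matrix (Fin m) (Fin m) ℝ) (M : Matrix (Fin n) (Fin m) ℝ) :
    sand n m A B M = A * M * B := rfl

lemma std_sand (n m : ℕ) (a : Fin n) (b : Fin n) (c d : Fin m) (M : Matrix (Fin n) (Fin m) ℝ) :
    Matrix.single a b (1:ℝ) * M * Matrix.single c d (1:ℝ) = M b c • Matrix.single a d (1:ℝ) := by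
  ext i j
  simp [Matrix.mul_apply, Matrix.single, ite_and, Finset.sum_ite_eq, Finset.sum_ite_eq',
    Matrix.smul_apply]
  aesop

abbrev OSet (p : ℕ) : Set (Matrix (Fin p) (Fin p) ℝ) := (Matrix.orthogonalGroup (Fin p) ℝ : Submonoid _)

lemma sand_mem_span (n m : ℕ) (A : Matrix (Fin n) (Fin n) ℝ) (B : Matrix (Fin m) (Fin m) ℝ) :
    sand n m A B ∈ Submodule.span ℝ (Set.range fun p :
      (Matrix.orthogonalGroup (Fin n) ℝ) × (Matrix.orthogonalGroup (Fin m) ℝ) =>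
      sand n m p.1 p.2) := by
  set W := Submodule.span ℝ (Set.range fun p :
      (Matrix.orthogonalGroup (Fin n) ℝ) × (Matrix.orthogonalGroup (Fin m) ℝ) =>
      sand n m p.1 p.2) with hW
  have h1 : ∀ u ∈ Matrix.orthogonalGroup (Fin n) ℝ, ∀ B₀ ∈ Submodule.span ℝ (OSet m),
      sand n m u B₀ ∈ W := by
    intro u hu B₀ hB₀
    induction hB₀ using Submodule.span_induction with
    | mem y hy => exact Submodule.subset_span ⟨(⟨u, hu⟩, ⟨y, hy⟩), rfl⟩
    | zero =>
      have : sand n m u 0 = 0 := by apply LinearMap.ext; intro M; simp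
      rw [this]; exact W.zero_mem
    | add y z _ _ hy hz =>
      have : sand n m u (y + z) = sand n m u y + sand n m u z := by
        apply LinearMap.ext; intro M; simp [Matrix.mul_add]
      rw [this]; exact W.add_mem hy hz
    | smul c y _ hy =>
      have : sand n m u (c • y) = c • sand n m u y := by
        apply LinearMap.ext; intro M; simp [Matrix.mul_smul]
      rw [this]; exact W.smul_mem c hy
  have h2 : ∀ A₀ ∈ Submodule.span ℝ (OSet n), sand n m A₀ B ∈ W := by
    have hBtop : B ∈ Submodule.span ℝ (OSet m) := by
      rw [span_orth_top m]; trivial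
    intro A₀ hA₀
    induction hA₀ using Submodule.span_induction with
    | mem y hy => exact h1 y hy B hBtop
    | zero =>
      have : sand n m 0 B = 0 := by apply LinearMap.ext; intro M; simp
      rw [this]; exact W.zero_mem
    | add y z _ _ hy hz =>
      have : sand n m (y + z) B = sand n m y B + sand n m z B := by
        apply LinearMap.ext; intro M; simp [Matrix.add_mul]
      rw [this]; exact W.add_mem hy hz
    | smul c y _ hy =>
      have : sand n m (c • y) B = c • sand n m y B := by
        apply LinearMap.ext; intro M; simp [Matrix.smul_mul]
      rw [this]; exact W.smul_mem c hy
  exact h2 A (by rw [span_orth_top n]; trivial)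

lemma end_mem_span (n m : ℕ) (T : Matrix (Fin n) (Fin m) ℝ →ₗ[ℝ] Matrix (Fin n) (Fin m) ℝ) :
    T ∈ Submodule.span ℝ (Set.range fun p :
      (Matrix.orthogonalGroup (Fin n) ℝ) × (Matrix.orthogonalGroup (Fin m) ℝ) =>
      sand n m p.1 p.2) := by
  have key : T = ∑ a : Fin n, ∑ b : Fin n, ∑ c : Fin m, ∑ d : Fin m,
      (T (Matrix.single b c 1)) a d • sand n m (Matrix.single a b 1) (Matrix.single c d 1) := by
    apply LinearMap.ext; intro M
    ext i j
    have hrhs : ∀ a b c d,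
        ((T (Matrix.single b c 1)) a d •
          sand n m (Matrix.single a b 1) (Matrix.single c d 1)) M
        = (T (Matrix.single b c 1)) a d • (M b c • Matrix.single a d (1:ℝ)) := by
      intro a b c d
      simp [std_sand]
    simp only [LinearMap.sum_apply, hrhs]
    -- expand T M via the standard basis
    conv_lhs => rw [matrix_eq_sum_single M]
    rw [map_sum]
    simp only [map_sum, Matrix.sum_apply]
    have hstd : ∀ (b : Fin n) (c : Fin m),
        Matrix.single b c (M b c) = M b c • Matrix.single b c (1:ℝ) := by
      intro b c; rw [smul_single]; simp
    have hdelta : ∀ (a : Fin n) (d : Fin m), (Matrix.single a d (1:ℝ)) i j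
        = if a = i then (if d = j then 1 else 0) else 0 := by
      intro a d; simp [Matrix.single, ite_and]
    simp only [hstd, _root_.map_smul, Matrix.smul_apply, smul_eq_mul, hdelta,
      mul_ite, mul_one, mul_zero]
    simp only [Finset.sum_ite_irrel, Finset.sum_const_zero, Finset.sum_ite_eq',
      Finset.mem_univ, if_true]
    exact Finset.sum_congr rfl fun b _ => Finset.sum_congr rfl fun c _ => mul_comm _ _
  rw [key]
  exact Submodule.sum_mem _ fun a _ => Submodule.sum_mem _ fun b _ =>
    Submodule.sum_mem _ fun c _ => Submodule.sum_mem _ fun d _ =>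
      Submodule.smul_mem _ _ (sand_mem_span n m _ _)

end

theorem exists_fluctuation_isolating_first (n m k : ℕ) (hk : 0 < k)
    (M : Fin k → Matrix (Fin n) (Fin m) ℝ) (hM : LinearIndependent ℝ M) :
    ∃ (J : Type) (_ : Fintype J) (r : J → ℝ)
      (u : J → Matrix.orthogonalGroup (Fin n) ℝ)
      (v : J → Matrix.orthogonalGroup (Fin m) ℝ),
      (∑ j, r j • ((u j : Matrix (Fin n) (Fin n) ℝ) * M ⟨0, hk⟩ *
          (v j : Matrix (Fin m) (Fin m) ℝ))) ≠ 0 ∧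
      ∀ i : Fin k, i ≠ ⟨0, hk⟩ →
        (∑ j, r j • ((u j : Matrix (Fin n) (Fin n) ℝ) * M i *
            (v j : Matrix (Fin m) (Fin m) ℝ))) = 0 := by
  classical
  set i0 : Fin k := ⟨0, hk⟩ with hi0
  -- a dual functional separating M i0 from the others
  have hli : LinearIndepOn ℝ id (Set.range M) := hM.linearIndepOn_id
  let B := Module.Basis.extend hli
  have hsub : Set.range M ⊆ hli.extend (Set.subset_univ _) := hli.subset_extend _
  let idx : Fin k → ↥(hli.extend (Set.subset_univ _)) := fun i => ⟨M i, hsub ⟨i, rfl⟩⟩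
  have hBidx : ∀ i, B (idx i) = M i := fun i => Module.Basis.extend_apply_self hli _
  let φ : Matrix (Fin n) (Fin m) ℝ →ₗ[ℝ] ℝ := B.coord (idx i0)
  have hφ0 : φ (M i0) = 1 := by
    have := hBidx i0
    simp only [φ, ← this, Module.Basis.coord_apply, Module.Basis.repr_self]
    simp
  have hφi : ∀ i : Fin k, i ≠ i0 → φ (M i) = 0 := by
    intro i hi
    have hne : idx i ≠ idx i0 := by
      intro h
      exact hi (hM.injective (Subtype.ext_iff.mp h))
    have := hBidx i
    simp only [φ, ← this, Module.Basis.coord_apply, Module.Basis.repr_self]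
    simp [Finsupp.single_apply_eq_zero, hne]
  -- the target endomorphism
  let T : Matrix (Fin n) (Fin m) ℝ →ₗ[ℝ] Matrix (Fin n) (Fin m) ℝ := φ.smulRight (M i0)
  have hT := end_mem_span n m T
  rw [Finsupp.mem_span_range_iff_exists_finsupp] at hT
  obtain ⟨c, hc⟩ := hT
  have hsum : ∀ X : Matrix (Fin n) (Fin m) ℝ,
      (∑ j : ↥c.support, c j.1 • ((j.1.1 : Matrix (Fin n) (Fin n) ℝ) * X *
        (j.1.2 : Matrix (Fin m) (Fin m) ℝ))) = T X := by
    intro X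
    rw [← hc, Finsupp.sum, LinearMap.sum_apply,
      ← Finset.sum_attach c.support (fun d => (c d • sand n m (d.1 : Matrix (Fin n) (Fin n) ℝ)
        (d.2 : Matrix (Fin m) (Fin m) ℝ)) X)]
    exact Finset.sum_congr rfl fun j _ => by simp
  refine ⟨↥c.support, inferInstance, fun j => c j.1, fun j => j.1.1, fun j => j.1.2, ?_, ?_⟩
  · rw [hsum]
    have : T (M i0) = M i0 := by simp [T, hφ0]
    rw [this]
    exact hM.ne_zero i0
  · intro i hi
    rw [hsum]
    simp [T, hφi i hi]
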